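/- For a finite multicomplex M, the homology of the chain complex (ℤM, ∂) splits: H_ℓ(M) ≅ ⊕_{p² ∈ M, 2·deg(p) ≤ ℓ} H_{ℓ−2·deg(p)}(M^{(p²)}), where H on the right is simplicial homology of the simplicial complexes M^{(p²)} (with the empty face placed in degree 0). -/

import Mathlib

open Finsupp

/-- A monomial in variables `x_1 < ⋯ < x_n`, given by its exponent vector. -/
abbrev Mon (n : ℕ) := Fin n → ℕ

/-- Total degree of a monomial. -/
def tdeg {n : ℕ} (m : Mon n) : ℕ := ∑ i, m i

/-- Divisibility of monomials. -/
def mdvd {n : ℕ} (m t : Mon n) : Prop := ∀ i, m i ≤ t i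

/-- A multicomplex: a finite set of monomials closed under taking divisors. -/
def IsMulticomplex {n : ℕ} (M : Finset (Mon n)) : Prop :=
  ∀ m t : Mon n, mdvd m t → t ∈ M → m ∈ M

/-- Square-free monomials. -/
def SqFree {n : ℕ} (m : Mon n) : Prop := ∀ i, m i ≤ 1

def decr {n : ℕ} (m : Mon n) (j : Fin n) : Mon n := Function.update m j (m j - 1)
def incr {n : ℕ} (m : Mon n) (j : Fin n) : Mon n := Function.update m j (m j + 1)
def unitMon {n : ℕ} (i : Fin n) : Mon n := fun j => if j = i then 1 else 0
/-- Sum of the exponents of the variables preceding `j`. -/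
def presum {n : ℕ} (m : Mon n) (j : Fin n) : ℕ := ∑ i ∈ Finset.univ.filter (· < j), m i
/-- Multiplication by the square `p²`. -/
def mulSq {n : ℕ} (p m : Mon n) : Mon n := fun i => 2 * p i + m i

/-- The Björner–Vrećica boundary operator on `ℤ[X]`. -/
noncomputable def bdry (n : ℕ) : (Mon n →₀ ℤ) →ₗ[ℤ] (Mon n →₀ ℤ) :=
  Finsupp.lsum ℤ fun m => LinearMap.toSpanSingleton ℤ _
    (∑ j, (((-1 : ℤ) ^ presum m j) * ((m j % 2 : ℕ) : ℤ)) • Finsupp.single (decr m j) (1 : ℤ))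

/-- The Björner–Vrećica boundary operator, with real coefficients. -/
noncomputable def bdryR (n : ℕ) : (Mon n →₀ ℝ) →ₗ[ℝ] (Mon n →₀ ℝ) :=
  Finsupp.lsum ℝ fun m => LinearMap.toSpanSingleton ℝ _
    (∑ j, (((-1 : ℝ) ^ presum m j) * ((m j % 2 : ℕ) : ℝ)) • Finsupp.single (decr m j) (1 : ℝ))

/-- The dual boundary operator `∂*` of the multicomplex `M`. -/
noncomputable def upL {n : ℕ} (M : Finset (Mon n)) : (Mon n →₀ ℝ) →ₗ[ℝ] (Mon n →₀ ℝ) :=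
  Finsupp.lsum ℝ fun m => LinearMap.toSpanSingleton ℝ _
    (∑ j, (if m j % 2 = 0 ∧ incr m j ∈ M then ((-1 : ℝ) ^ presum m j) else 0) •
      Finsupp.single (incr m j) (1 : ℝ))

/-- Inner product making the monomials an orthonormal basis. -/
noncomputable def dot {n : ℕ} (f g : Mon n →₀ ℝ) : ℝ := ∑ m ∈ f.support, f m * g m

/-- Degree-`d` part of `M`. -/
def Mdeg {n : ℕ} (M : Finset (Mon n)) (d : ℕ) : Finset (Mon n) :=
  M.filter fun m => tdeg m = d

/-- `ℝM_d`, the span of the degree-`d` monomials of `M`. -/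
noncomputable def Vdeg {n : ℕ} (M : Finset (Mon n)) (d : ℕ) : Submodule ℝ (Mon n →₀ ℝ) :=
  Submodule.span ℝ ((fun m => Finsupp.single m (1 : ℝ)) '' ↑(Mdeg M d))

/-- The simplicial complex `M^{(p²)} = {q squarefree : p²q ∈ M}`. -/
def Mp2 {n : ℕ} (M : Finset (Mon n)) (p : Mon n) : Finset (Mon n) :=
  M.filter fun q => (∀ i, q i ≤ 1) ∧ mulSq p q ∈ M

/-- The set of monomials `p` with `p² ∈ M`. -/
def sqrts {n : ℕ} (M : Finset (Mon n)) : Finset (Mon n) :=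
  (M.filter fun m => ∀ i, m i % 2 = 0).image fun m i => m i / 2

/-- Laplacian `L' = ∂∂*` of the multicomplex `M`. -/
noncomputable def lapUp {n : ℕ} (M : Finset (Mon n)) : (Mon n →₀ ℝ) →ₗ[ℝ] (Mon n →₀ ℝ) :=
  bdryR n ∘ₗ upL M

/-- Laplacian `L'' = ∂*∂` of the multicomplex `M`. -/
noncomputable def lapDown {n : ℕ} (M : Finset (Mon n)) : (Mon n →₀ ℝ) →ₗ[ℝ] (Mon n →₀ ℝ) :=
  upL M ∘ₗ bdryR n

/-- Multiplicity of `μ` as an eigenvalue of an operator `T` on `ℝM_d`. -/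
noncomputable def multOf {n : ℕ} (M : Finset (Mon n)) (d : ℕ)
    (T : (Mon n →₀ ℝ) →ₗ[ℝ] (Mon n →₀ ℝ)) (μ : ℝ) : ℕ :=
  Module.finrank ℝ ↥(LinearMap.ker (T - μ • LinearMap.id) ⊓ Vdeg M d)

/-- Multiplicity of `μ` in the spectrum `s'_d` of `L'_d`. -/
noncomputable def multL' {n : ℕ} (M : Finset (Mon n)) (d : ℕ) (μ : ℝ) : ℕ :=
  multOf M d (lapUp M) μ

/-- Multiplicity of `μ` in the spectrum `s''_d` of `L''_d`. -/
noncomputable def multL'' {n : ℕ} (M : Finset (Mon n)) (d : ℕ) (μ : ℝ) : ℕ :=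
  multOf M d (lapDown M) μ

/-- Multiplicity of `μ` in the spectrum `s^{tot}_d` of `L_d = L'_d + L''_d`. -/
noncomputable def multL {n : ℕ} (M : Finset (Mon n)) (d : ℕ) (μ : ℝ) : ℕ :=
  multOf M d (lapUp M + lapDown M) μ

/-- Shifted multicomplex (relative to its support). -/
def Shifted {n : ℕ} (N : Finset (Mon n)) : Prop :=
  ∀ (m : Mon n) (i j : Fin n), i < j → incr m j ∈ N → unitMon i ∈ N → incr m i ∈ N

/-- Shifted simplicial complex (relative to its support). -/
def ShiftedSimp {n : ℕ} (N : Finset (Mon n)) : Prop :=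
  ∀ (m : Mon n) (i j : Fin n), i < j → incr m j ∈ N → unitMon i ∈ N → m i = 0 →
    incr m i ∈ N

/-- `d_j`: the number of monomials of degree `k` in `N` divisible by `x_j`. -/
def dseq {n : ℕ} (N : Finset (Mon n)) (k : ℕ) (j : Fin n) : ℕ :=
  ((Mdeg N k).filter fun m => 1 ≤ m j).card

/-- The `j`-th entry of the conjugate partition `d_k^T(N)`. -/
def dconj {n : ℕ} (N : Finset (Mon n)) (k : ℕ) (j : ℕ) : ℕ :=
  (Finset.univ.filter fun i : Fin n => j ≤ dseq N k i).card

open DirectSum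

/-- Cycles: `ker ∂ ∩ ℤM_ℓ`. -/
noncomputable def cycles {n : ℕ} (M : Finset (Mon n)) (ℓ : ℕ) : Submodule ℤ (Mon n →₀ ℤ) :=
  LinearMap.ker (bdry n) ⊓
    Submodule.span ℤ ((fun m => Finsupp.single m (1 : ℤ)) '' ↑(Mdeg M ℓ))

/-- Boundaries: `∂(ℤM_{ℓ+1})`. -/
noncomputable def bnds {n : ℕ} (M : Finset (Mon n)) (ℓ : ℕ) : Submodule ℤ (Mon n →₀ ℤ) :=
  Submodule.map (bdry n)
    (Submodule.span ℤ ((fun m => Finsupp.single m (1 : ℤ)) '' ↑(Mdeg M (ℓ + 1))))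

/-- The degree-`ℓ` homology of `(ℤM, ∂)`. -/
abbrev Hgy {n : ℕ} (M : Finset (Mon n)) (ℓ : ℕ) :=
  ↥(cycles M ℓ) ⧸ Submodule.comap (cycles M ℓ).subtype (bnds M ℓ)

namespace BVaux
open Finsupp
variable {n : ℕ}

def root (m : Mon n) : Mon n := fun i => m i / 2
def sf (m : Mon n) : Mon n := fun i => m i % 2

noncomputable def rho (p : Mon n) : (Mon n →₀ ℤ) →ₗ[ℤ] (Mon n →₀ ℤ) :=
  Finsupp.lsum ℤ fun m =>
    if root m = p then LinearMap.toSpanSingleton ℤ _ (Finsupp.single (sf m) (1:ℤ)) else 0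

noncomputable def phi (p : Mon n) : (Mon n →₀ ℤ) →ₗ[ℤ] (Mon n →₀ ℤ) :=
  Finsupp.lmapDomain ℤ ℤ (mulSq p)

lemma rho_single (p m : Mon n) (c : ℤ) :
    rho p (Finsupp.single m c) = if root m = p then Finsupp.single (sf m) c else 0 := by
  simp only [rho, Finsupp.lsum_single, apply_ite (fun (T : ℤ →ₗ[ℤ] (Mon n →₀ ℤ)) => T c),
    LinearMap.toSpanSingleton_apply, LinearMap.zero_apply, Finsupp.smul_single, smul_eq_mul,
    mul_one]

lemma phi_single (p q : Mon n) (c : ℤ) :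
    phi p (Finsupp.single q c) = Finsupp.single (mulSq p q) c := by
  simp [phi, Finsupp.mapDomain_single]

lemma mulSq_root_sf (m : Mon n) : mulSq (root m) (sf m) = m := by
  funext i; simp only [mulSq, root, sf]; omega

lemma root_mulSq (p : Mon n) {q : Mon n} (hq : ∀ i, q i ≤ 1) : root (mulSq p q) = p := by
  funext i; have := hq i; simp only [mulSq, root, Pi.zero_apply]; omega

lemma sf_mulSq (p : Mon n) {q : Mon n} (hq : ∀ i, q i ≤ 1) : sf (mulSq p q) = q := by
  funext i; have := hq i; simp only [mulSq, sf]; omega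

lemma tdeg_mulSq (p q : Mon n) : tdeg (mulSq p q) = 2 * tdeg p + tdeg q := by
  simp [tdeg, mulSq, Finset.sum_add_distrib, Finset.mul_sum]

lemma presum_mulSq (p m : Mon n) (j : Fin n) :
    presum (mulSq p m) j = 2 * presum p j + presum m j := by
  simp [presum, mulSq, Finset.sum_add_distrib, Finset.mul_sum]

lemma neg_one_pow_presum_sf (m : Mon n) (j : Fin n) :
    ((-1:ℤ))^(presum (sf m) j) = (-1)^(presum m j) := by
  rw [neg_one_pow_eq_pow_mod_two, neg_one_pow_eq_pow_mod_two (n := presum m j)]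
  congr 1
  unfold presum sf
  rw [Finset.sum_nat_mod, Finset.sum_nat_mod _ 2 m]
  congr 1
  exact Finset.sum_congr rfl fun i _ => by omega

lemma decr_mulSq (p m : Mon n) (j : Fin n) (h : 1 ≤ m j) :
    decr (mulSq p m) j = mulSq p (decr m j) := by
  funext i
  simp only [decr, mulSq, Function.update_apply]
  by_cases hij : i = j
  · subst hij; simp; omega
  · simp [hij]

lemma root_decr {m : Mon n} {j : Fin n} (h : m j % 2 = 1) : root (decr m j) = root m := by
  funext i
  simp only [root, decr, Function.update_apply]
  by_cases hij : i = j
  · subst hij; simp; omega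
  · simp [hij]

lemma sf_decr {m : Mon n} {j : Fin n} (h : m j % 2 = 1) : sf (decr m j) = decr (sf m) j := by
  funext i
  simp only [sf, decr, Function.update_apply]
  by_cases hij : i = j
  · subst hij; simp; omega
  · simp [hij]

lemma bdry_single (m : Mon n) :
    bdry n (Finsupp.single m (1:ℤ)) =
      ∑ j, (((-1 : ℤ) ^ presum m j) * ((m j % 2 : ℕ) : ℤ)) • Finsupp.single (decr m j) (1 : ℤ) := by
  simp [bdry, Finsupp.lsum_single, LinearMap.toSpanSingleton_apply]


lemma bdry_comp_phi (p : Mon n) : bdry n ∘ₗ phi p = phi p ∘ₗ bdry n := by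
  refine Finsupp.lhom_ext' fun m => LinearMap.ext_ring ?_
  simp only [LinearMap.comp_apply, Finsupp.lsingle_apply, phi_single, bdry_single, map_sum,
    map_smul, phi_single]
  refine Finset.sum_congr rfl fun j _ => ?_
  rcases Nat.mod_two_eq_zero_or_one (m j) with h | h
  · have h2 : (mulSq p m) j % 2 = 0 := by simp only [mulSq]; omega
    simp [h, h2]
  · have h2 : (mulSq p m) j % 2 = 1 := by simp only [mulSq]; omega
    have h3 : 1 ≤ m j := by omega
    rw [h, h2, decr_mulSq p m j h3, presum_mulSq, pow_add, pow_mul, neg_one_sq, one_pow, one_mul]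

lemma rho_comp_bdry (p : Mon n) : rho p ∘ₗ bdry n = bdry n ∘ₗ rho p := by
  refine Finsupp.lhom_ext' fun m => LinearMap.ext_ring ?_
  simp only [LinearMap.comp_apply, Finsupp.lsingle_apply, bdry_single, map_sum, map_smul,
    rho_single]
  by_cases hroot : root m = p
  · rw [if_pos hroot, bdry_single]
    refine Finset.sum_congr rfl fun j _ => ?_
    rcases Nat.mod_two_eq_zero_or_one (m j) with h | h
    · have h2 : (sf m) j % 2 = 0 := by simp only [sf]; omega
      simp [h, h2]
    · have h2 : (sf m) j % 2 = 1 := by simp only [sf]; omega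
      rw [h, h2, root_decr h, if_pos hroot, sf_decr h, neg_one_pow_presum_sf]
  · rw [if_neg hroot, map_zero]
    refine Finset.sum_eq_zero fun j _ => ?_
    rcases Nat.mod_two_eq_zero_or_one (m j) with h | h
    · simp [h]
    · rw [root_decr h, if_neg hroot, smul_zero]

lemma span_eq_supported (S : Finset (Mon n)) :
    Submodule.span ℤ ((fun m => Finsupp.single m (1:ℤ)) '' ↑S) = Finsupp.supported ℤ ℤ (↑S : Set (Mon n)) :=
  (Finsupp.supported_eq_span_single ℤ (↑S : Set (Mon n))).symm

lemma mapsTo_supported (T : (Mon n →₀ ℤ) →ₗ[ℤ] (Mon n →₀ ℤ)) (s t : Set (Mon n))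
    (h : ∀ m ∈ s, T (Finsupp.single m 1) ∈ Finsupp.supported ℤ ℤ t)
    {f : Mon n →₀ ℤ} (hf : f ∈ Finsupp.supported ℤ ℤ s) :
    T f ∈ Finsupp.supported ℤ ℤ t := by
  have h1 : T f ∈ Submodule.map T (Finsupp.supported ℤ ℤ s) := Submodule.mem_map_of_mem hf
  rw [Finsupp.supported_eq_span_single, Submodule.map_span] at h1
  refine Submodule.span_le.mpr ?_ h1
  rintro x ⟨_, ⟨m, hm, rfl⟩, rfl⟩
  exact h m hm

lemma eq_on_supported (T T' : (Mon n →₀ ℤ) →ₗ[ℤ] (Mon n →₀ ℤ)) (s : Set (Mon n))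
    (h : ∀ m ∈ s, T (Finsupp.single m 1) = T' (Finsupp.single m 1))
    {f : Mon n →₀ ℤ} (hf : f ∈ Finsupp.supported ℤ ℤ s) : T f = T' f := by
  have hle : Finsupp.supported ℤ ℤ s ≤ LinearMap.ker (T - T') := by
    rw [Finsupp.supported_eq_span_single, Submodule.span_le]
    rintro x ⟨m, hm, rfl⟩
    simp [LinearMap.mem_ker, LinearMap.sub_apply, h m hm, sub_self]
  have := hle hf
  rw [LinearMap.mem_ker, LinearMap.sub_apply, sub_eq_zero] at this
  exact this

lemma mem_Mdeg {M : Finset (Mon n)} {m : Mon n} {d : ℕ} :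
    m ∈ Mdeg M d ↔ m ∈ M ∧ tdeg m = d := Finset.mem_filter

lemma sf_mem_Mdeg {M : Finset (Mon n)} (hM : IsMulticomplex M) {m : Mon n} {d : ℕ}
    (hm : m ∈ Mdeg M d) :
    sf m ∈ Mdeg (Mp2 M (root m)) (d - 2 * tdeg (root m)) ∧ 2 * tdeg (root m) ≤ d ∧
      mulSq (root m) 0 ∈ M := by
  obtain ⟨hmM, hdeg⟩ := mem_Mdeg.mp hm
  have hsfM : sf m ∈ M := hM (sf m) m (fun i => by simp only [sf]; omega) hmM
  have hmul : mulSq (root m) (sf m) = m := mulSq_root_sf m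
  have htd : tdeg m = 2 * tdeg (root m) + tdeg (sf m) := by
    conv_lhs => rw [← hmul]
    exact tdeg_mulSq _ _
  refine ⟨?_, by omega, ?_⟩
  · rw [mem_Mdeg]
    refine ⟨?_, by omega⟩
    simp only [Mp2, Finset.mem_filter]
    exact ⟨hsfM, fun i => by simp only [sf]; omega, by rw [hmul]; exact hmM⟩
  · refine hM _ m (fun i => ?_) hmM
    simp only [mulSq, root, Pi.zero_apply]; omega

lemma mulSq_mem_Mdeg {M : Finset (Mon n)} {p q : Mon n} {d : ℕ}
    (hq : q ∈ Mdeg (Mp2 M p) d) : mulSq p q ∈ Mdeg M (2 * tdeg p + d) := by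
  obtain ⟨hq1, hdeg⟩ := mem_Mdeg.mp hq
  simp only [Mp2, Finset.mem_filter] at hq1
  exact mem_Mdeg.mpr ⟨hq1.2.2, by rw [tdeg_mulSq, hdeg]⟩

lemma sqfree_of_mem_Mp2 {M : Finset (Mon n)} {p q : Mon n} (hq : q ∈ Mp2 M p) :
    ∀ i, q i ≤ 1 := by
  simp only [Mp2, Finset.mem_filter] at hq
  exact hq.2.1

lemma single_mem_supported' {S : Finset (Mon n)} {m : Mon n} (hm : m ∈ S) (c : ℤ) :
    Finsupp.single m c ∈ Finsupp.supported ℤ ℤ (↑S : Set (Mon n)) :=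
  Finsupp.single_mem_supported ℤ c hm

abbrev Psub (M : Finset (Mon n)) (ℓ : ℕ) : Type :=
  {p : Mon n // mulSq p 0 ∈ M ∧ 2 * tdeg p ≤ ℓ}

noncomputable def fintypeP (M : Finset (Mon n)) (ℓ : ℕ) : Fintype (Psub M ℓ) :=
  Fintype.ofInjective (fun p : Psub M ℓ => (⟨mulSq p.1 0, p.2.1⟩ : {m : Mon n // m ∈ M}))
    (by
      intro a b h
      apply Subtype.ext; funext i
      have := congrFun (congrArg Subtype.val h) i
      simp only [mulSq] at this
      omega)

lemma rho_supported {M : Finset (Mon n)} (hM : IsMulticomplex M) (p : Mon n) {d d' : ℕ}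
    (hd : d = d' + 2 * tdeg p) {y : Mon n →₀ ℤ}
    (hy : y ∈ Finsupp.supported ℤ ℤ (↑(Mdeg M d) : Set (Mon n))) :
    rho p y ∈ Finsupp.supported ℤ ℤ (↑(Mdeg (Mp2 M p) d') : Set (Mon n)) := by
  refine mapsTo_supported _ _ _ ?_ hy
  intro m hm
  rw [rho_single]
  split
  · rename_i h
    obtain ⟨hsf, hle, _⟩ := sf_mem_Mdeg hM (d := d) hm
    rw [h] at hsf
    have : d - 2 * tdeg p = d' := by omega
    rw [this] at hsf
    exact single_mem_supported' hsf 1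
  · exact Submodule.zero_mem _

lemma phi_supported {M : Finset (Mon n)} (p : Mon n) {d d' : ℕ}
    (hd : 2 * tdeg p + d = d') {y : Mon n →₀ ℤ}
    (hy : y ∈ Finsupp.supported ℤ ℤ (↑(Mdeg (Mp2 M p) d) : Set (Mon n))) :
    phi p y ∈ Finsupp.supported ℤ ℤ (↑(Mdeg M d') : Set (Mon n)) := by
  refine mapsTo_supported _ _ _ ?_ hy
  intro q hq
  rw [phi_single]
  have := mulSq_mem_Mdeg (p := p) hq
  rw [hd] at this
  exact single_mem_supported' this 1

lemma mem_cycles_iff {N : Finset (Mon n)} {d : ℕ} {f : Mon n →₀ ℤ} :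
    f ∈ cycles N d ↔ bdry n f = 0 ∧ f ∈ Finsupp.supported ℤ ℤ (↑(Mdeg N d) : Set (Mon n)) := by
  rw [cycles, Submodule.mem_inf, LinearMap.mem_ker, span_eq_supported]

lemma mem_bnds_iff {N : Finset (Mon n)} {d : ℕ} {f : Mon n →₀ ℤ} :
    f ∈ bnds N d ↔ ∃ y ∈ Finsupp.supported ℤ ℤ (↑(Mdeg N (d+1)) : Set (Mon n)),
      bdry n y = f := by
  rw [bnds, span_eq_supported, Submodule.mem_map]

lemma bdry_rho (p : Mon n) (f : Mon n →₀ ℤ) : bdry n (rho p f) = rho p (bdry n f) :=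
  (LinearMap.congr_fun (rho_comp_bdry p) f).symm

lemma bdry_phi (p : Mon n) (f : Mon n →₀ ℤ) : bdry n (phi p f) = phi p (bdry n f) :=
  LinearMap.congr_fun (bdry_comp_phi p) f

lemma rho_mem_cycles {M : Finset (Mon n)} {ℓ : ℕ} (hM : IsMulticomplex M) (p : Psub M ℓ)
    {z : Mon n →₀ ℤ} (hz : z ∈ cycles M ℓ) :
    rho p.1 z ∈ cycles (Mp2 M p.1) (ℓ - 2 * tdeg p.1) := by
  obtain ⟨h1, h2⟩ := mem_cycles_iff.mp hz
  refine mem_cycles_iff.mpr ⟨?_, ?_⟩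
  · rw [bdry_rho, h1, map_zero]
  · exact rho_supported hM p.1 (by have := p.2.2; omega) h2

lemma phi_mem_cycles {M : Finset (Mon n)} {ℓ : ℕ} (p : Psub M ℓ)
    {w : Mon n →₀ ℤ} (hw : w ∈ cycles (Mp2 M p.1) (ℓ - 2 * tdeg p.1)) :
    phi p.1 w ∈ cycles M ℓ := by
  obtain ⟨h1, h2⟩ := mem_cycles_iff.mp hw
  refine mem_cycles_iff.mpr ⟨?_, ?_⟩
  · rw [bdry_phi, h1, map_zero]
  · exact phi_supported p.1 (by have := p.2.2; omega) h2

lemma sum_phi_rho {M : Finset (Mon n)} {ℓ : ℕ} (hM : IsMulticomplex M)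
    [Fintype (Psub M ℓ)] {f : Mon n →₀ ℤ}
    (hf : f ∈ Finsupp.supported ℤ ℤ (↑(Mdeg M ℓ) : Set (Mon n))) :
    ∑ p : Psub M ℓ, phi p.1 (rho p.1 f) = f := by
  have key := eq_on_supported (∑ p : Psub M ℓ, (phi p.1) ∘ₗ (rho p.1)) LinearMap.id _ ?_ hf
  · simpa only [LinearMap.sum_apply, LinearMap.comp_apply, LinearMap.id_apply] using key
  intro m hm
  simp only [LinearMap.sum_apply, LinearMap.comp_apply, LinearMap.id_apply, rho_single]
  obtain ⟨hsf, hle, hsq⟩ := sf_mem_Mdeg hM hm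
  rw [Fintype.sum_eq_single (⟨root m, hsq, hle⟩ : Psub M ℓ) ?_]
  · rw [if_pos rfl, phi_single, mulSq_root_sf]
  · intro q hq
    rw [if_neg, map_zero]
    intro hcontra
    exact hq (Subtype.ext hcontra.symm)

lemma rho_phi {M : Finset (Mon n)} {ℓ : ℕ} (p p' : Psub M ℓ) {d : ℕ} {f : Mon n →₀ ℤ}
    (hf : f ∈ Finsupp.supported ℤ ℤ (↑(Mdeg (Mp2 M p'.1) d) : Set (Mon n))) :
    rho p.1 (phi p'.1 f) = if p' = p then f else 0 := by
  have key := eq_on_supported ((rho p.1) ∘ₗ (phi p'.1))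
    (if p' = p then LinearMap.id else 0) _ ?_ hf
  · simpa only [LinearMap.comp_apply, apply_ite (fun (T : (Mon n →₀ ℤ) →ₗ[ℤ] (Mon n →₀ ℤ)) => T f),
      LinearMap.id_apply, LinearMap.zero_apply] using key
  intro q hq
  have hsf : ∀ i, q i ≤ 1 := sqfree_of_mem_Mp2 (mem_Mdeg.mp hq).1
  simp only [LinearMap.comp_apply, phi_single, rho_single, root_mulSq p'.1 hsf,
    sf_mulSq p'.1 hsf]
  by_cases h : p' = p
  · rw [if_pos (by rw [h]), if_pos h, LinearMap.id_apply]
  · rw [if_neg (fun hc => h (Subtype.ext hc)), if_neg h, LinearMap.zero_apply]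

end BVaux
/-- `H_ℓ(M) ≅ ⊕_{p² ∈ M, 2 deg p ≤ ℓ} H_{ℓ − 2 deg p}(M^{(p²)})`. -/
theorem homology_splits {n : ℕ} (M : Finset (Mon n)) (hM : IsMulticomplex M) (ℓ : ℕ) :
    Nonempty (Hgy M ℓ ≃ₗ[ℤ]
      ⨁ p : {p : Mon n // mulSq p 0 ∈ M ∧ 2 * tdeg p ≤ ℓ},
        Hgy (Mp2 M p.1) (ℓ - 2 * tdeg p.1)) := by
  classical
  haveI : Fintype (BVaux.Psub M ℓ) := BVaux.fintypeP M ℓ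
  -- the chain map in each direction
  set F : ↥(cycles M ℓ) →ₗ[ℤ]
      (∀ p : BVaux.Psub M ℓ, ↥(cycles (Mp2 M p.1) (ℓ - 2 * tdeg p.1))) :=
    LinearMap.pi fun p => LinearMap.codRestrict _ ((BVaux.rho p.1) ∘ₗ (cycles M ℓ).subtype)
      (fun z => BVaux.rho_mem_cycles hM p z.2) with hF
  set G : (∀ p : BVaux.Psub M ℓ, ↥(cycles (Mp2 M p.1) (ℓ - 2 * tdeg p.1))) →ₗ[ℤ]
      ↥(cycles M ℓ) :=
    LinearMap.codRestrict _
      (∑ p : BVaux.Psub M ℓ,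
        (BVaux.phi p.1) ∘ₗ (cycles (Mp2 M p.1) (ℓ - 2 * tdeg p.1)).subtype ∘ₗ LinearMap.proj p)
      (fun w => by
        simp only [LinearMap.sum_apply, LinearMap.comp_apply, LinearMap.proj_apply,
          Submodule.coe_subtype]
        exact Submodule.sum_mem _ fun p _ => BVaux.phi_mem_cycles p (w p).2) with hG
  have hFval : ∀ (z : ↥(cycles M ℓ)) (p : BVaux.Psub M ℓ),
      ((F z p : Mon n →₀ ℤ)) = BVaux.rho p.1 z.1 := by
    intro z p
    simp [hF, LinearMap.pi_apply, LinearMap.codRestrict_apply]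
  have hGval : ∀ (w : ∀ p : BVaux.Psub M ℓ, ↥(cycles (Mp2 M p.1) (ℓ - 2 * tdeg p.1))),
      ((G w : Mon n →₀ ℤ)) = ∑ p : BVaux.Psub M ℓ, BVaux.phi p.1 (w p).1 := by
    intro w
    simp [hG, LinearMap.codRestrict_apply, LinearMap.sum_apply, LinearMap.comp_apply,
      LinearMap.proj_apply, Submodule.coe_subtype]
  have h1 : F ∘ₗ G = LinearMap.id := by
    refine LinearMap.ext fun w => funext fun p => Subtype.ext ?_
    rw [LinearMap.comp_apply, LinearMap.id_apply, hFval, hGval, map_sum]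
    have : ∀ p' : BVaux.Psub M ℓ,
        BVaux.rho p.1 (BVaux.phi p'.1 ((w p' : Mon n →₀ ℤ))) =
          if p' = p then (w p' : Mon n →₀ ℤ) else 0 := fun p' =>
      BVaux.rho_phi p p' (BVaux.mem_cycles_iff.mp (w p').2).2
    rw [Finset.sum_congr rfl fun p' _ => this p']
    simp
  have h2 : G ∘ₗ F = LinearMap.id := by
    refine LinearMap.ext fun z => Subtype.ext ?_
    rw [LinearMap.comp_apply, LinearMap.id_apply, hGval]
    have : ∀ p : BVaux.Psub M ℓ, ((F z p : Mon n →₀ ℤ)) = BVaux.rho p.1 z.1 := hFval z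
    rw [Finset.sum_congr rfl fun p _ => by rw [this p]]
    exact BVaux.sum_phi_rho hM (BVaux.mem_cycles_iff.mp z.2).2
  set e : ↥(cycles M ℓ) ≃ₗ[ℤ]
      (∀ p : BVaux.Psub M ℓ, ↥(cycles (Mp2 M p.1) (ℓ - 2 * tdeg p.1))) :=
    LinearEquiv.ofLinear F G h1 h2 with he
  have heval : ∀ z, e z = F z := fun z => rfl
  -- boundary submodules correspond
  have hmap : (Submodule.comap (cycles M ℓ).subtype (bnds M ℓ)).map (e : _ →ₗ[ℤ] _) =
      Submodule.pi Set.univ (fun p : BVaux.Psub M ℓ =>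
        Submodule.comap (cycles (Mp2 M p.1) (ℓ - 2 * tdeg p.1)).subtype
          (bnds (Mp2 M p.1) (ℓ - 2 * tdeg p.1))) := by
    apply le_antisymm
    · rintro _ ⟨z, hz, rfl⟩
      rw [Submodule.mem_pi]
      intro p _
      have hco : ((e z) p : Mon n →₀ ℤ) = BVaux.rho p.1 z.1 := hFval z p
      simp only [LinearEquiv.coe_coe]
      show ((e z) p : Mon n →₀ ℤ) ∈ bnds (Mp2 M p.1) (ℓ - 2 * tdeg p.1)
      rw [hco]
      replace hz : (z : Mon n →₀ ℤ) ∈ bnds M ℓ := hz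
      obtain ⟨y, hy, hyz⟩ := BVaux.mem_bnds_iff.mp hz
      refine BVaux.mem_bnds_iff.mpr ⟨BVaux.rho p.1 y, ?_, ?_⟩
      · exact BVaux.rho_supported hM p.1 (by have := p.2.2; omega) hy
      · rw [BVaux.bdry_rho, hyz]
    · intro w hw
      rw [Submodule.mem_pi] at hw
      refine ⟨G w, ?_, by show e (G w) = w; rw [heval]; exact LinearMap.congr_fun h1 w⟩
      show (G w : Mon n →₀ ℤ) ∈ bnds M ℓ
      rw [hGval]
      choose y hy hyb using fun p : BVaux.Psub M ℓ =>
        BVaux.mem_bnds_iff.mp (Submodule.mem_comap.mp (hw p (Set.mem_univ p)))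
      refine BVaux.mem_bnds_iff.mpr ⟨∑ p : BVaux.Psub M ℓ, BVaux.phi p.1 (y p), ?_, ?_⟩
      · refine Submodule.sum_mem _ fun p _ => ?_
        exact BVaux.phi_supported p.1 (by have := p.2.2; omega) (hy p)
      · rw [map_sum]
        exact Finset.sum_congr rfl fun p _ => by rw [BVaux.bdry_phi, hyb p]; rfl
  exact ⟨(Submodule.Quotient.equiv _ _ e hmap).trans
    ((Submodule.quotientPi _).trans (DirectSum.linearEquivFunOnFintype ℤ _ _).symm)⟩
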